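/- Fix a real number a and real numbers V, W, and let ρ > 0, z ∈ ℝ. Then for all vectors s, t in a real inner product space (e.g. ℝ³), with λ₁₁ = f₋ e^V cosh W, λ₂₂ = f₊ e^{−V} cosh W, λ₁₂ = ρ sinh W and e^{h₂} = f₋/ρ (equivalently h₂ = ½ log(f₋/f₊)), the following identity holds: λ₂₂‖s‖² − 2λ₁₂⟨s,t⟩ + λ₁₁‖t‖² = ρ · [ e^{h₂+V} cosh W · ‖e^{−h₂−V} tanh W · s − t‖² + e^{−h₂−V} (cosh W)^{−1} ‖s‖² ]. (This converts the twist-potential kinetic term λ^{ij}⟨∇ζ^i,∇ζ^j⟩ of the mass functional into an explicitly nonnegative sum of squares.) -/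

import Mathlib

/-- For ρ > 0 and any vectors s, t in a real inner product space, with
λ₁₁ = f₋ e^V cosh W, λ₂₂ = f₊ e^{−V} cosh W, λ₁₂ = ρ sinh W and h₂ = ½ log(f₋/f₊),
the quadratic form λ₂₂‖s‖² − 2λ₁₂⟨s,t⟩ + λ₁₁‖t‖² equals
ρ·[e^{h₂+V} cosh W ‖e^{−h₂−V} tanh W • s − t‖² + e^{−h₂−V} (cosh W)⁻¹ ‖s‖²]. -/
theorem twist_kinetic_term_sum_of_squares
    {E : Type*} [NormedAddCommGroup E] [InnerProductSpace ℝ E]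
    (a V W ρ z : ℝ) (hρ : 0 < ρ)
    (fm fp h₂ lam₁₁ lam₂₂ lam₁₂ : ℝ)
    (hfm : fm = Real.sqrt (ρ ^ 2 + (z - a) ^ 2) - (z - a))
    (hfp : fp = Real.sqrt (ρ ^ 2 + (z - a) ^ 2) + (z - a))
    (hh₂ : h₂ = (1 / 2) * Real.log (fm / fp))
    (hl₁₁ : lam₁₁ = fm * Real.exp V * Real.cosh W)
    (hl₂₂ : lam₂₂ = fp * Real.exp (-V) * Real.cosh W)
    (hl₁₂ : lam₁₂ = ρ * Real.sinh W)
    (s t : E) :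
    lam₂₂ * ‖s‖ ^ 2 - 2 * lam₁₂ * (inner ℝ s t : ℝ) + lam₁₁ * ‖t‖ ^ 2 =
      ρ * (Real.exp (h₂ + V) * Real.cosh W *
            ‖(Real.exp (-h₂ - V) * Real.tanh W) • s - t‖ ^ 2 +
          Real.exp (-h₂ - V) * (Real.cosh W)⁻¹ * ‖s‖ ^ 2) := by
  have hsq : Real.sqrt (ρ ^ 2 + (z - a) ^ 2) ^ 2 = ρ ^ 2 + (z - a) ^ 2 :=
    Real.sq_sqrt (by positivity)
  have hs0 : 0 ≤ Real.sqrt (ρ ^ 2 + (z - a) ^ 2) := Real.sqrt_nonneg _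
  have habs : |z - a| < Real.sqrt (ρ ^ 2 + (z - a) ^ 2) := by
    nlinarith [abs_nonneg (z - a), sq_abs (z - a)]
  have hfm0 : 0 < fm := by
    have := le_abs_self (z - a); rw [hfm]; linarith
  have hprod : fm * fp = ρ ^ 2 := by rw [hfm, hfp]; nlinarith
  have hfp0 : 0 < fp := by nlinarith
  have hρne : ρ ≠ 0 := ne_of_gt hρ
  have hfmne : fm ≠ 0 := ne_of_gt hfm0
  have hdiv : fm / fp = (fm / ρ) ^ 2 := by
    field_simp; nlinarith
  have hexp : Real.exp h₂ = fm / ρ := by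
    rw [hh₂, hdiv, Real.log_pow]
    push_cast
    rw [show (1 / 2 : ℝ) * (2 * Real.log (fm / ρ)) = Real.log (fm / ρ) by ring]
    exact Real.exp_log (div_pos hfm0 hρ)
  have hcosh : 0 < Real.cosh W := Real.cosh_pos W
  have hcne : Real.cosh W ≠ 0 := ne_of_gt hcosh
  have hid : Real.cosh W ^ 2 - Real.sinh W ^ 2 = 1 := Real.cosh_sq_sub_sinh_sq W
  have hEp : Real.exp (h₂ + V) = (fm / ρ) * Real.exp V := by
    rw [Real.exp_add, hexp]
  have hEm : Real.exp (-h₂ - V) = (ρ / fm) * Real.exp (-V) := by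
    rw [show -h₂ - V = -h₂ + -V by ring, Real.exp_add, Real.exp_neg, hexp]
    field_simp
  have htanh : Real.tanh W = Real.sinh W / Real.cosh W := Real.tanh_eq_sinh_div_cosh W
  have hnorm : ‖(Real.exp (-h₂ - V) * Real.tanh W) • s - t‖ ^ 2 =
      (Real.exp (-h₂ - V) * Real.tanh W) ^ 2 * ‖s‖ ^ 2
        - 2 * (Real.exp (-h₂ - V) * Real.tanh W) * (inner ℝ s t : ℝ) + ‖t‖ ^ 2 := by
    rw [norm_sub_sq_real, norm_smul, real_inner_smul_left, Real.norm_eq_abs,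
      mul_pow, sq_abs]
    ring
  have hA : ρ * (Real.exp (h₂ + V) * Real.cosh W) = lam₁₁ := by
    rw [hEp, hl₁₁]; field_simp
  have hB : ρ * (Real.exp (h₂ + V) * Real.cosh W *
      (Real.exp (-h₂ - V) * Real.tanh W)) = lam₁₂ := by
    rw [hEp, hEm, htanh, hl₁₂, Real.exp_neg]; field_simp
  have hC : ρ * (Real.exp (h₂ + V) * Real.cosh W *
      (Real.exp (-h₂ - V) * Real.tanh W) ^ 2 +
      Real.exp (-h₂ - V) * (Real.cosh W)⁻¹) = lam₂₂ := by
    rw [hEp, hEm, htanh, hl₂₂]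
    have hfp' : fp = ρ ^ 2 / fm := by field_simp; linarith
    rw [hfp', Real.exp_neg]
    have hE := Real.exp_pos V
    field_simp
    linear_combination (-1 : ℝ) * hid
  rw [hnorm, ← hA, ← hB, ← hC]
  ring
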